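/- arXiv:math/0503415 — 3 statements merged into one kernel-verified Lean document; each statement's English description precedes it below -/
import Mathlib

section
/- Let x, ψ : [a,b] → ℝ^n and u : [a,b] → ℝ^m be continuously differentiable. Assume that for every t ∈ [a,b] the triple (x,u,ψ) satisfies: (i) the control system x′(t) = φ(t,x(t),u(t)) (= ∇_ψH); (ii) the adjoint system ψ′(t) = −∇ₓH(t,x(t),u(t),ψ(t)); (iii) the maximality condition ∇ᵤH(t,x(t),u(t),ψ(t)) = 0; and (iv) the invariance identity ∂H/∂t · τ(t) + ⟨∇ₓH, ξ(t)⟩ + ⟨∇ᵤH, υ(t)⟩ + ⟨∇_ψH, π(t)⟩ − ⟨π(t), x′(t)⟩ − ⟨ψ(t), ξ′(t)⟩ + H · τ′(t) = 0, where all partial derivatives of H and H itself are evaluated at (t,x(t),u(t),ψ(t)) (ξ′ and τ′ exist since all data are C¹). Then there exists a constant c ∈ ℝ such that ⟨ψ(t), ξ(t)⟩ − H(t,x(t),u(t),ψ(t)) · τ(t) = c for all t ∈ [a,b]. -/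
open MeasureTheory Set RealInnerProductSpace

noncomputable section

/-- Euclidean space `ℝ^k`. -/
abbrev Vec (k : ℕ) : Type := EuclideanSpace ℝ (Fin k)

/-- The Hamiltonian `H(t,x,u,ψ) = -L(t,x,u) + ⟨ψ, φ(t,x,u)⟩`. -/
def Ham {n m : ℕ} (L : ℝ → Vec n → Vec m → ℝ) (φ : ℝ → Vec n → Vec m → Vec n) :
    ℝ → Vec n → Vec m → Vec n → ℝ :=
  fun t x u ψ => -L t x u + ⟪ψ, φ t x u⟫

/-- Partial derivative `∂H/∂t`. -/
def Hpt {n m : ℕ} (H : ℝ → Vec n → Vec m → Vec n → ℝ)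
    (t : ℝ) (x : Vec n) (u : Vec m) (ψ : Vec n) : ℝ :=
  deriv (fun s => H s x u ψ) t

/-- Partial gradient `∇ₓH`. -/
def Hpx {n m : ℕ} (H : ℝ → Vec n → Vec m → Vec n → ℝ)
    (t : ℝ) (x : Vec n) (u : Vec m) (ψ : Vec n) : Vec n :=
  gradient (fun y => H t y u ψ) x

/-- Partial gradient `∇ᵤH`. -/
def Hpu {n m : ℕ} (H : ℝ → Vec n → Vec m → Vec n → ℝ)
    (t : ℝ) (x : Vec n) (u : Vec m) (ψ : Vec n) : Vec m :=
  gradient (fun v => H t x v ψ) u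

/-- Partial gradient `∇_ψH`. -/
def Hpψ {n m : ℕ} (H : ℝ → Vec n → Vec m → Vec n → ℝ)
    (t : ℝ) (x : Vec n) (u : Vec m) (ψ : Vec n) : Vec n :=
  gradient (fun q => H t x u q) ψ

lemma inner_gradient_apply' {k : ℕ} (g : Vec k → ℝ) (x v : Vec k) :
    ⟪gradient g x, v⟫ = fderiv ℝ g x v := by
  rw [← InnerProductSpace.toDual_apply_apply, gradient, LinearIsometryEquiv.apply_symm_apply]

lemma Hpψ_eq' {n m : ℕ} (L : ℝ → Vec n → Vec m → ℝ) (φ : ℝ → Vec n → Vec m → Vec n)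
    (t : ℝ) (x : Vec n) (u : Vec m) (ψ : Vec n) :
    Hpψ (Ham L φ) t x u ψ = φ t x u := by
  have h : HasFDerivAt (fun q : Vec n => Ham L φ t x u q)
      ((InnerProductSpace.toDual ℝ (Vec n) (φ t x u) : Vec n →L[ℝ] ℝ)) ψ := by
    have he : (fun q : Vec n => Ham L φ t x u q)
        = fun q => (InnerProductSpace.toDual ℝ (Vec n) (φ t x u) : Vec n →L[ℝ] ℝ) q + (-L t x u) := by
      funext q
      show -L t x u + ⟪q, φ t x u⟫ = ⟪φ t x u, q⟫ + -L t x u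
      rw [real_inner_comm]; ring
    rw [he]
    exact ((InnerProductSpace.toDual ℝ (Vec n) (φ t x u)).hasFDerivAt).add_const (-L t x u)
  exact (hasGradientAt_iff_hasFDerivAt.mpr h).gradient

lemma fderiv_apply_decomp {n m : ℕ} (f : ℝ × Vec n × Vec m × Vec n → ℝ)
    {t : ℝ} {x : Vec n} {u : Vec m} {ψ : Vec n}
    (hf : Differentiable ℝ f) (s : ℝ) (v : Vec n) (w : Vec m) (q : Vec n) :
    fderiv ℝ f (t, x, u, ψ) (s, v, w, q) =
      deriv (fun r => f (r, x, u, ψ)) t * s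
      + ⟪gradient (fun y => f (t, y, u, ψ)) x, v⟫
      + ⟪gradient (fun z => f (t, x, z, ψ)) u, w⟫
      + ⟪gradient (fun p => f (t, x, u, p)) ψ, q⟫ := by
  have hfp := (hf (t, x, u, ψ)).hasFDerivAt
  have ht : deriv (fun r => f (r, x, u, ψ)) t
      = fderiv ℝ f (t, x, u, ψ) ((1:ℝ), (0:Vec n), (0:Vec m), (0:Vec n)) := by
    have hj : HasDerivAt (fun r : ℝ => (r, x, u, ψ))
        ((1:ℝ), (0:Vec n), (0:Vec m), (0:Vec n)) t :=
      (hasDerivAt_id t).prodMk ((hasDerivAt_const t x).prodMk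
        ((hasDerivAt_const t u).prodMk (hasDerivAt_const t ψ)))
    exact (hfp.comp_hasDerivAt t hj).deriv
  have hxp : ⟪gradient (fun y => f (t, y, u, ψ)) x, v⟫
      = fderiv ℝ f (t, x, u, ψ) ((0:ℝ), v, (0:Vec m), (0:Vec n)) := by
    rw [inner_gradient_apply']
    have hj : HasFDerivAt (fun y : Vec n => ((t:ℝ), y, u, ψ))
        ((0 : Vec n →L[ℝ] ℝ).prod ((ContinuousLinearMap.id ℝ (Vec n)).prod
          ((0 : Vec n →L[ℝ] Vec m).prod (0 : Vec n →L[ℝ] Vec n)))) x :=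
      (hasFDerivAt_const t x).prodMk ((hasFDerivAt_id x).prodMk
        ((hasFDerivAt_const u x).prodMk (hasFDerivAt_const ψ x)))
    have h2 : HasFDerivAt (fun y : Vec n => f (t, y, u, ψ))
        ((fderiv ℝ f (t, x, u, ψ)).comp
          ((0 : Vec n →L[ℝ] ℝ).prod ((ContinuousLinearMap.id ℝ (Vec n)).prod
            ((0 : Vec n →L[ℝ] Vec m).prod (0 : Vec n →L[ℝ] Vec n))))) x := hfp.comp x hj
    rw [h2.fderiv]
    simp
  have hup : ⟪gradient (fun z => f (t, x, z, ψ)) u, w⟫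
      = fderiv ℝ f (t, x, u, ψ) ((0:ℝ), (0:Vec n), w, (0:Vec n)) := by
    rw [inner_gradient_apply']
    have hj : HasFDerivAt (fun z : Vec m => ((t:ℝ), x, z, ψ))
        ((0 : Vec m →L[ℝ] ℝ).prod ((0 : Vec m →L[ℝ] Vec n).prod
          ((ContinuousLinearMap.id ℝ (Vec m)).prod (0 : Vec m →L[ℝ] Vec n)))) u :=
      (hasFDerivAt_const t u).prodMk ((hasFDerivAt_const x u).prodMk
        ((hasFDerivAt_id u).prodMk (hasFDerivAt_const ψ u)))
    have h2 : HasFDerivAt (fun z : Vec m => f (t, x, z, ψ))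
        ((fderiv ℝ f (t, x, u, ψ)).comp
          ((0 : Vec m →L[ℝ] ℝ).prod ((0 : Vec m →L[ℝ] Vec n).prod
            ((ContinuousLinearMap.id ℝ (Vec m)).prod (0 : Vec m →L[ℝ] Vec n))))) u := hfp.comp u hj
    rw [h2.fderiv]
    simp
  have hψp : ⟪gradient (fun p => f (t, x, u, p)) ψ, q⟫
      = fderiv ℝ f (t, x, u, ψ) ((0:ℝ), (0:Vec n), (0:Vec m), q) := by
    rw [inner_gradient_apply']
    have hj : HasFDerivAt (fun p : Vec n => ((t:ℝ), x, u, p))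
        ((0 : Vec n →L[ℝ] ℝ).prod ((0 : Vec n →L[ℝ] Vec n).prod
          ((0 : Vec n →L[ℝ] Vec m).prod (ContinuousLinearMap.id ℝ (Vec n))))) ψ :=
      (hasFDerivAt_const t ψ).prodMk ((hasFDerivAt_const x ψ).prodMk
        ((hasFDerivAt_const u ψ).prodMk (hasFDerivAt_id ψ)))
    have h2 : HasFDerivAt (fun p : Vec n => f (t, x, u, p))
        ((fderiv ℝ f (t, x, u, ψ)).comp
          ((0 : Vec n →L[ℝ] ℝ).prod ((0 : Vec n →L[ℝ] Vec n).prod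
            ((0 : Vec n →L[ℝ] Vec m).prod (ContinuousLinearMap.id ℝ (Vec n)))))) ψ := hfp.comp ψ hj
    rw [h2.fderiv]
    simp
  have hsum : ((s, v, w, q) : ℝ × Vec n × Vec m × Vec n)
      = s • ((1:ℝ), (0:Vec n), (0:Vec m), (0:Vec n))
        + ((0:ℝ), v, (0:Vec m), (0:Vec n))
        + ((0:ℝ), (0:Vec n), w, (0:Vec n))
        + ((0:ℝ), (0:Vec n), (0:Vec m), q) := by
    simp [Prod.ext_iff]
  rw [ht, hxp, hup, hψp, hsum]
  simp only [map_add, _root_.map_smul, smul_eq_mul]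
  ring

/-- **Noether's theorem for optimal control** (Theorem 1 of the paper):
along a Pontryagin extremal of an invariant problem, `⟨ψ, ξ⟩ - H·τ` is constant. -/
theorem stmt_0 {n m : ℕ} {a b : ℝ} (hab : a < b)
    (L : ℝ → Vec n → Vec m → ℝ) (φ : ℝ → Vec n → Vec m → Vec n)
    (hL : ContDiff ℝ 1 (fun p : ℝ × Vec n × Vec m => L p.1 p.2.1 p.2.2))
    (hφ : ContDiff ℝ 1 (fun p : ℝ × Vec n × Vec m => φ p.1 p.2.1 p.2.2))
    (T : ℝ → Vec n → Vec m → Vec n → ℝ) (X : ℝ → Vec n → Vec m → Vec n → Vec n)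
    (U : ℝ → Vec n → Vec m → Vec n → Vec m) (Ψ : ℝ → Vec n → Vec m → Vec n → Vec n)
    (hT : ContDiff ℝ 1 (fun p : ℝ × Vec n × Vec m × Vec n => T p.1 p.2.1 p.2.2.1 p.2.2.2))
    (hX : ContDiff ℝ 1 (fun p : ℝ × Vec n × Vec m × Vec n => X p.1 p.2.1 p.2.2.1 p.2.2.2))
    (hU : ContDiff ℝ 1 (fun p : ℝ × Vec n × Vec m × Vec n => U p.1 p.2.1 p.2.2.1 p.2.2.2))
    (hΨ : ContDiff ℝ 1 (fun p : ℝ × Vec n × Vec m × Vec n => Ψ p.1 p.2.1 p.2.2.1 p.2.2.2))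
    -- the trajectory: continuously differentiable on [a,b]
    (x ψ : ℝ → Vec n) (u : ℝ → Vec m)
    (hx : ContDiffOn ℝ 1 x (Icc a b)) (hψ : ContDiffOn ℝ 1 ψ (Icc a b))
    (hu : ContDiffOn ℝ 1 u (Icc a b))
    -- the infinitesimal generators evaluated along the trajectory
    (τ : ℝ → ℝ) (ξ : ℝ → Vec n) (υ : ℝ → Vec m) (π : ℝ → Vec n)
    (hτ : ∀ t, τ t = T t (x t) (u t) (ψ t))
    (hξ : ∀ t, ξ t = X t (x t) (u t) (ψ t))
    (hυ : ∀ t, υ t = U t (x t) (u t) (ψ t))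
    (hπ : ∀ t, π t = Ψ t (x t) (u t) (ψ t))
    -- (i) the control system
    (hcs : ∀ t ∈ Icc a b, derivWithin x (Icc a b) t = φ t (x t) (u t))
    -- (ii) the adjoint system
    (has : ∀ t ∈ Icc a b,
      derivWithin ψ (Icc a b) t = -Hpx (Ham L φ) t (x t) (u t) (ψ t))
    -- (iii) the maximality condition
    (hmc : ∀ t ∈ Icc a b, Hpu (Ham L φ) t (x t) (u t) (ψ t) = 0)
    -- (iv) the invariance identity
    (hinv : ∀ t ∈ Icc a b,
      Hpt (Ham L φ) t (x t) (u t) (ψ t) * τ t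
        + ⟪Hpx (Ham L φ) t (x t) (u t) (ψ t), ξ t⟫
        + ⟪Hpu (Ham L φ) t (x t) (u t) (ψ t), υ t⟫
        + ⟪Hpψ (Ham L φ) t (x t) (u t) (ψ t), π t⟫
        - ⟪π t, derivWithin x (Icc a b) t⟫
        - ⟪ψ t, derivWithin ξ (Icc a b) t⟫
        + Ham L φ t (x t) (u t) (ψ t) * derivWithin τ (Icc a b) t = 0) :
    ∃ c : ℝ, ∀ t ∈ Icc a b,
      ⟪ψ t, ξ t⟫ - Ham L φ t (x t) (u t) (ψ t) * τ t = c := by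
  have hs : UniqueDiffOn ℝ (Icc a b) := uniqueDiffOn_Icc hab
  -- smoothness of the Hamiltonian as a function of the 4-tuple
  have hH : ContDiff ℝ 1 (fun p : ℝ × Vec n × Vec m × Vec n =>
      Ham L φ p.1 p.2.1 p.2.2.1 p.2.2.2) := by
    have hproj : ContDiff ℝ 1
        (fun p : ℝ × Vec n × Vec m × Vec n => ((p.1, p.2.1, p.2.2.1) : ℝ × Vec n × Vec m)) := by
      fun_prop
    have h1 : ContDiff ℝ 1 (fun p : ℝ × Vec n × Vec m × Vec n => L p.1 p.2.1 p.2.2.1) :=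
      hL.comp hproj
    have h2 : ContDiff ℝ 1 (fun p : ℝ × Vec n × Vec m × Vec n => φ p.1 p.2.1 p.2.2.1) :=
      hφ.comp hproj
    have h3 : ContDiff ℝ 1 (fun p : ℝ × Vec n × Vec m × Vec n => p.2.2.2) := by fun_prop
    exact h1.neg.add (ContDiff.inner ℝ h3 h2)
  have hHd : Differentiable ℝ (fun p : ℝ × Vec n × Vec m × Vec n =>
      Ham L φ p.1 p.2.1 p.2.2.1 p.2.2.2) := hH.differentiable one_ne_zero
  set F : ℝ → ℝ := fun r => ⟪ψ r, ξ r⟫ - Ham L φ r (x r) (u r) (ψ r) * τ r with hFdef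
  have key : ∀ t ∈ Icc a b, HasDerivWithinAt F 0 (Icc a b) t := by
    intro t ht
    have hxt : HasDerivWithinAt x (derivWithin x (Icc a b) t) (Icc a b) t :=
      ((hx.differentiableOn one_ne_zero) t ht).hasDerivWithinAt
    have hut : HasDerivWithinAt u (derivWithin u (Icc a b) t) (Icc a b) t :=
      ((hu.differentiableOn one_ne_zero) t ht).hasDerivWithinAt
    have hψt : HasDerivWithinAt ψ (derivWithin ψ (Icc a b) t) (Icc a b) t :=
      ((hψ.differentiableOn one_ne_zero) t ht).hasDerivWithinAt
    have hγ : HasDerivWithinAt (fun r => ((r, x r, u r, ψ r) : ℝ × Vec n × Vec m × Vec n))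
        ((1:ℝ), derivWithin x (Icc a b) t, derivWithin u (Icc a b) t, derivWithin ψ (Icc a b) t)
        (Icc a b) t :=
      (hasDerivWithinAt_id t _).prodMk (hxt.prodMk (hut.prodMk hψt))
    have hγd : DifferentiableWithinAt ℝ
        (fun r => ((r, x r, u r, ψ r) : ℝ × Vec n × Vec m × Vec n)) (Icc a b) t :=
      hγ.differentiableWithinAt
    have hXc : HasDerivWithinAt (fun r => X r (x r) (u r) (ψ r))
        (fderiv ℝ (fun p : ℝ × Vec n × Vec m × Vec n =>
            X p.1 p.2.1 p.2.2.1 p.2.2.2) (t, x t, u t, ψ t)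
          ((1:ℝ), derivWithin x (Icc a b) t, derivWithin u (Icc a b) t,
            derivWithin ψ (Icc a b) t)) (Icc a b) t :=
      by have := ((hX.differentiable one_ne_zero) (t, x t, u t, ψ t)).hasFDerivAt.comp_hasDerivWithinAt t hγ; exact this
    have hTc : HasDerivWithinAt (fun r => T r (x r) (u r) (ψ r))
        (fderiv ℝ (fun p : ℝ × Vec n × Vec m × Vec n =>
            T p.1 p.2.1 p.2.2.1 p.2.2.2) (t, x t, u t, ψ t)
          ((1:ℝ), derivWithin x (Icc a b) t, derivWithin u (Icc a b) t,
            derivWithin ψ (Icc a b) t)) (Icc a b) t :=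
      by have := ((hT.differentiable one_ne_zero) (t, x t, u t, ψ t)).hasFDerivAt.comp_hasDerivWithinAt t hγ; exact this
    have hξd : DifferentiableWithinAt ℝ ξ (Icc a b) t := by
      rw [funext hξ]; exact hXc.differentiableWithinAt
    have hτd : DifferentiableWithinAt ℝ τ (Icc a b) t := by
      rw [funext hτ]; exact hTc.differentiableWithinAt
    have hξt : HasDerivWithinAt ξ (derivWithin ξ (Icc a b) t) (Icc a b) t :=
      hξd.hasDerivWithinAt
    have hτt : HasDerivWithinAt τ (derivWithin τ (Icc a b) t) (Icc a b) t :=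
      hτd.hasDerivWithinAt
    have hHt : HasDerivWithinAt (fun r => Ham L φ r (x r) (u r) (ψ r))
        (fderiv ℝ (fun p : ℝ × Vec n × Vec m × Vec n =>
            Ham L φ p.1 p.2.1 p.2.2.1 p.2.2.2) (t, x t, u t, ψ t)
          ((1:ℝ), derivWithin x (Icc a b) t, derivWithin u (Icc a b) t,
            derivWithin ψ (Icc a b) t)) (Icc a b) t :=
      by have := (hHd (t, x t, u t, ψ t)).hasFDerivAt.comp_hasDerivWithinAt t hγ; exact this
    have hinner : HasDerivWithinAt (fun r => ⟪ψ r, ξ r⟫)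
        (⟪ψ t, derivWithin ξ (Icc a b) t⟫ + ⟪derivWithin ψ (Icc a b) t, ξ t⟫) (Icc a b) t :=
      hψt.inner ℝ hξt
    have hmul := hHt.mul hτt
    have hFd := hinner.sub hmul
    have hdec : fderiv ℝ (fun p : ℝ × Vec n × Vec m × Vec n =>
            Ham L φ p.1 p.2.1 p.2.2.1 p.2.2.2) (t, x t, u t, ψ t)
          ((1:ℝ), derivWithin x (Icc a b) t, derivWithin u (Icc a b) t,
            derivWithin ψ (Icc a b) t)
        = Hpt (Ham L φ) t (x t) (u t) (ψ t) * 1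
          + ⟪Hpx (Ham L φ) t (x t) (u t) (ψ t), derivWithin x (Icc a b) t⟫
          + ⟪Hpu (Ham L φ) t (x t) (u t) (ψ t), derivWithin u (Icc a b) t⟫
          + ⟪Hpψ (Ham L φ) t (x t) (u t) (ψ t), derivWithin ψ (Icc a b) t⟫ :=
      fderiv_apply_decomp _ hHd 1 _ _ _
    have hinv0 := hinv t ht
    have hV : ⟪ψ t, derivWithin ξ (Icc a b) t⟫ + ⟪derivWithin ψ (Icc a b) t, ξ t⟫
        - (fderiv ℝ (fun p : ℝ × Vec n × Vec m × Vec n =>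
              Ham L φ p.1 p.2.1 p.2.2.1 p.2.2.2) (t, x t, u t, ψ t)
            ((1:ℝ), derivWithin x (Icc a b) t, derivWithin u (Icc a b) t,
              derivWithin ψ (Icc a b) t) * τ t
          + Ham L φ t (x t) (u t) (ψ t) * derivWithin τ (Icc a b) t) = 0 := by
      rw [hdec, hcs t ht, has t ht, hmc t ht, Hpψ_eq']
      rw [hcs t ht, hmc t ht, Hpψ_eq'] at hinv0
      rw [real_inner_comm (π t) (φ t (x t) (u t))] at hinv0
      simp only [inner_zero_left, inner_neg_left, inner_neg_right, mul_one, add_zero] at hinv0 ⊢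
      rw [real_inner_comm (φ t (x t) (u t)) (Hpx (Ham L φ) t (x t) (u t) (ψ t))]
      linear_combination -hinv0
    rw [hV] at hFd
    exact hFd
  have hdiffF : DifferentiableOn ℝ F (Icc a b) :=
    fun t ht => (key t ht).differentiableWithinAt
  have hzero : ∀ t ∈ Ico a b, derivWithin F (Icc a b) t = 0 := fun t ht =>
    (key t (Ico_subset_Icc_self ht)).derivWithin (hs t (Ico_subset_Icc_self ht))
  exact ⟨F a, constant_of_derivWithin_zero hdiffF hzero⟩
end
end

section
/- Let x̃, ψ̃ : [a,b] → ℝ^n and ũ : [a,b] → ℝ^m be continuously differentiable, and suppose that for every t ∈ [a,b]: x̃′(t) = ∇_ψH(t,x̃(t),ũ(t),ψ̃(t)) (= φ(t,x̃(t),ũ(t))), ψ̃′(t) = −∇ₓH(t,x̃(t),ũ(t),ψ̃(t)), and ∇ᵤH(t,x̃(t),ũ(t),ψ̃(t)) = 0. Then the function t ↦ H(t, x̃(t), ũ(t), ψ̃(t)) is differentiable on [a,b] and its derivative at each t ∈ [a,b] equals ∂H/∂t (t, x̃(t), ũ(t), ψ̃(t)). -/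
open MeasureTheory Set RealInnerProductSpace

noncomputable section

/-- Property (2.9) of the paper: along a Pontryagin extremal, the total time derivative
of the Hamiltonian equals its partial time derivative. -/
theorem stmt_6 {n m : ℕ} {a b : ℝ} (hab : a < b)
    (L : ℝ → Vec n → Vec m → ℝ) (φ : ℝ → Vec n → Vec m → Vec n)
    (hL : ContDiff ℝ 1 (fun p : ℝ × Vec n × Vec m => L p.1 p.2.1 p.2.2))
    (hφ : ContDiff ℝ 1 (fun p : ℝ × Vec n × Vec m => φ p.1 p.2.1 p.2.2))
    (xe ψe : ℝ → Vec n) (ue : ℝ → Vec m)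
    (hxe : ContDiffOn ℝ 1 xe (Icc a b)) (hψe : ContDiffOn ℝ 1 ψe (Icc a b))
    (hue : ContDiffOn ℝ 1 ue (Icc a b))
    -- the control system
    (hcs : ∀ t ∈ Icc a b,
      derivWithin xe (Icc a b) t = Hpψ (Ham L φ) t (xe t) (ue t) (ψe t)
        ∧ Hpψ (Ham L φ) t (xe t) (ue t) (ψe t) = φ t (xe t) (ue t))
    -- the adjoint system
    (has : ∀ t ∈ Icc a b,
      derivWithin ψe (Icc a b) t = -Hpx (Ham L φ) t (xe t) (ue t) (ψe t))
    -- the maximality condition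
    (hmc : ∀ t ∈ Icc a b, Hpu (Ham L φ) t (xe t) (ue t) (ψe t) = 0) :
    ∀ t ∈ Icc a b,
      HasDerivWithinAt (fun s => Ham L φ s (xe s) (ue s) (ψe s))
        (Hpt (Ham L φ) t (xe t) (ue t) (ψe t)) (Icc a b) t := by
  intro t ht
  classical
  -- abbreviations
  set x' := derivWithin xe (Icc a b) t with hx'
  set u' := derivWithin ue (Icc a b) t with hu'
  set ψ' := derivWithin ψe (Icc a b) t with hψ'
  set p₀ : ℝ × Vec n × Vec m × Vec n := (t, xe t, ue t, ψe t) with hp₀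
  -- F : full Hamiltonian on the product space
  have hF : ContDiff ℝ 1 (fun p : ℝ × Vec n × Vec m × Vec n =>
      Ham L φ p.1 p.2.1 p.2.2.1 p.2.2.2) := by
    have hproj : ContDiff ℝ 1 (fun p : ℝ × Vec n × Vec m × Vec n =>
        ((p.1, p.2.1, p.2.2.1) : ℝ × Vec n × Vec m)) :=
      contDiff_fst.prodMk ((contDiff_fst.comp contDiff_snd).prodMk
        (contDiff_fst.comp (contDiff_snd.comp contDiff_snd)))
    have h1 : ContDiff ℝ 1 (fun p : ℝ × Vec n × Vec m × Vec n => L p.1 p.2.1 p.2.2.1) :=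
      hL.comp hproj
    have h2 : ContDiff ℝ 1 (fun p : ℝ × Vec n × Vec m × Vec n => φ p.1 p.2.1 p.2.2.1) :=
      hφ.comp hproj
    have h3 : ContDiff ℝ 1 (fun p : ℝ × Vec n × Vec m × Vec n => p.2.2.2) :=
      contDiff_snd.comp (contDiff_snd.comp contDiff_snd)
    simpa [Ham] using h1.neg.add (h3.inner ℝ h2)
  set F : ℝ × Vec n × Vec m × Vec n → ℝ :=
    fun p => Ham L φ p.1 p.2.1 p.2.2.1 p.2.2.2 with hFdef
  set D : (ℝ × Vec n × Vec m × Vec n) →L[ℝ] ℝ := fderiv ℝ F p₀ with hD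
  have hFd : HasFDerivAt F D p₀ := (hF.differentiable one_ne_zero p₀).hasFDerivAt
  -- the curve
  have hγ : HasDerivWithinAt (fun s => ((s, xe s, ue s, ψe s) : ℝ × Vec n × Vec m × Vec n))
      ((1 : ℝ), x', u', ψ') (Icc a b) t := by
    refine HasDerivWithinAt.prodMk (hasDerivWithinAt_id t _) (HasDerivWithinAt.prodMk ?_ (HasDerivWithinAt.prodMk ?_ ?_))
    · exact ((hxe.differentiableOn one_ne_zero) t ht).hasDerivWithinAt
    · exact ((hue.differentiableOn one_ne_zero) t ht).hasDerivWithinAt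
    · exact ((hψe.differentiableOn one_ne_zero) t ht).hasDerivWithinAt
  have hchain : HasDerivWithinAt (fun s => Ham L φ s (xe s) (ue s) (ψe s))
      (D ((1 : ℝ), x', u', ψ')) (Icc a b) t := by
    have := hFd.comp_hasDerivWithinAt t hγ; exact this
  -- partial derivative in t
  have hιt : HasDerivAt (fun s : ℝ => ((s, xe t, ue t, ψe t) : ℝ × Vec n × Vec m × Vec n))
      ((1 : ℝ), (0 : Vec n), (0 : Vec m), (0 : Vec n)) t :=
    HasDerivAt.prodMk (hasDerivAt_id t) (HasDerivAt.prodMk (hasDerivAt_const t _)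
      (HasDerivAt.prodMk (hasDerivAt_const t _) (hasDerivAt_const t _)))
  have ht' : Hpt (Ham L φ) t (xe t) (ue t) (ψe t)
      = D ((1 : ℝ), (0 : Vec n), (0 : Vec m), (0 : Vec n)) := by
    have := (hFd.comp_hasDerivAt t hιt).deriv
    simpa [Hpt, hFdef, Function.comp_def] using this
  -- gradient in x
  have hKx : HasFDerivAt (fun y : Vec n => ((t, y, ue t, ψe t) : ℝ × Vec n × Vec m × Vec n))
      ((0 : Vec n →L[ℝ] ℝ).prod ((ContinuousLinearMap.id ℝ (Vec n)).prod
        ((0 : Vec n →L[ℝ] Vec m).prod (0 : Vec n →L[ℝ] Vec n)))) (xe t) :=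
    HasFDerivAt.prodMk (hasFDerivAt_const t _) (HasFDerivAt.prodMk (hasFDerivAt_id _)
      (HasFDerivAt.prodMk (hasFDerivAt_const _ _) (hasFDerivAt_const _ _)))
  have hx : ∀ v : Vec n, ⟪Hpx (Ham L φ) t (xe t) (ue t) (ψe t), v⟫
      = D ((0 : ℝ), v, (0 : Vec m), (0 : Vec n)) := by
    intro v
    have hfd := (hFd.comp (xe t) hKx).fderiv
    have : Hpx (Ham L φ) t (xe t) (ue t) (ψe t)
        = (InnerProductSpace.toDual ℝ (Vec n)).symm (D.comp
          ((0 : Vec n →L[ℝ] ℝ).prod ((ContinuousLinearMap.id ℝ (Vec n)).prod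
            ((0 : Vec n →L[ℝ] Vec m).prod (0 : Vec n →L[ℝ] Vec n))))) := by
      rw [Hpx, gradient]
      congr 1
    rw [this, InnerProductSpace.toDual_symm_apply]
    simp
  -- gradient in u
  have hKu : HasFDerivAt (fun w : Vec m => ((t, xe t, w, ψe t) : ℝ × Vec n × Vec m × Vec n))
      ((0 : Vec m →L[ℝ] ℝ).prod ((0 : Vec m →L[ℝ] Vec n).prod
        ((ContinuousLinearMap.id ℝ (Vec m)).prod (0 : Vec m →L[ℝ] Vec n)))) (ue t) :=
    HasFDerivAt.prodMk (hasFDerivAt_const t _) (HasFDerivAt.prodMk (hasFDerivAt_const _ _)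
      (HasFDerivAt.prodMk (hasFDerivAt_id _) (hasFDerivAt_const _ _)))
  have hu : ∀ v : Vec m, ⟪Hpu (Ham L φ) t (xe t) (ue t) (ψe t), v⟫
      = D ((0 : ℝ), (0 : Vec n), v, (0 : Vec n)) := by
    intro v
    have hfd := (hFd.comp (ue t) hKu).fderiv
    have : Hpu (Ham L φ) t (xe t) (ue t) (ψe t)
        = (InnerProductSpace.toDual ℝ (Vec m)).symm (D.comp
          ((0 : Vec m →L[ℝ] ℝ).prod ((0 : Vec m →L[ℝ] Vec n).prod
            ((ContinuousLinearMap.id ℝ (Vec m)).prod (0 : Vec m →L[ℝ] Vec n))))) := by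
      rw [Hpu, gradient]
      congr 1
    rw [this, InnerProductSpace.toDual_symm_apply]
    simp
  -- gradient in ψ
  have hKψ : HasFDerivAt (fun q : Vec n => ((t, xe t, ue t, q) : ℝ × Vec n × Vec m × Vec n))
      ((0 : Vec n →L[ℝ] ℝ).prod ((0 : Vec n →L[ℝ] Vec n).prod
        ((0 : Vec n →L[ℝ] Vec m).prod (ContinuousLinearMap.id ℝ (Vec n))))) (ψe t) :=
    HasFDerivAt.prodMk (hasFDerivAt_const t _) (HasFDerivAt.prodMk (hasFDerivAt_const _ _)
      (HasFDerivAt.prodMk (hasFDerivAt_const _ _) (hasFDerivAt_id _)))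
  have hψ : ∀ v : Vec n, ⟪Hpψ (Ham L φ) t (xe t) (ue t) (ψe t), v⟫
      = D ((0 : ℝ), (0 : Vec n), (0 : Vec m), v) := by
    intro v
    have hfd := (hFd.comp (ψe t) hKψ).fderiv
    have : Hpψ (Ham L φ) t (xe t) (ue t) (ψe t)
        = (InnerProductSpace.toDual ℝ (Vec n)).symm (D.comp
          ((0 : Vec n →L[ℝ] ℝ).prod ((0 : Vec n →L[ℝ] Vec n).prod
            ((0 : Vec n →L[ℝ] Vec m).prod (ContinuousLinearMap.id ℝ (Vec n)))))) := by
      rw [Hpψ, gradient]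
      congr 1
    rw [this, InnerProductSpace.toDual_symm_apply]
    simp
  -- decompose the total derivative
  have hsplit : ((1 : ℝ), x', u', ψ')
      = ((1 : ℝ), (0 : Vec n), (0 : Vec m), (0 : Vec n))
        + ((0 : ℝ), x', (0 : Vec m), (0 : Vec n))
        + ((0 : ℝ), (0 : Vec n), u', (0 : Vec n))
        + ((0 : ℝ), (0 : Vec n), (0 : Vec m), ψ') := by
    simp [Prod.ext_iff]
  have key : D ((1 : ℝ), x', u', ψ') = Hpt (Ham L φ) t (xe t) (ue t) (ψe t) := by
    rw [hsplit, map_add, map_add, map_add, ht', ← hx x', ← hu u', ← hψ ψ']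
    have e1 : x' = Hpψ (Ham L φ) t (xe t) (ue t) (ψe t) := (hcs t ht).1
    have e2 : ψ' = -Hpx (Ham L φ) t (xe t) (ue t) (ψe t) := has t ht
    have e3 : Hpu (Ham L φ) t (xe t) (ue t) (ψe t) = 0 := hmc t ht
    rw [e1, e2, e3, inner_zero_left, inner_neg_right,
      real_inner_comm (Hpψ (Ham L φ) t (xe t) (ue t) (ψe t))]
    ring
  exact key ▸ hchain
end
end

section
/- Let h = (h_t, h_x, h_u, h_ψ) : ℝ × ℝ^n × ℝ^m × ℝ^n × ℝ → ℝ × ℝ^n × ℝ^m × ℝ^n be twice continuously differentiable with h(t,x,u,ψ,0) = (t,x,u,ψ) for all (t,x,u,ψ), and define the infinitesimal generators T(t,x,u,ψ) = ∂h_t/∂s(t,x,u,ψ,0), X(t,x,u,ψ) = ∂h_x/∂s(t,x,u,ψ,0), U(t,x,u,ψ) = ∂h_u/∂s(t,x,u,ψ,0), Ψ(t,x,u,ψ) = ∂h_ψ/∂s(t,x,u,ψ,0). Let x, ψ : [a,b] → ℝ^n and u : [a,b] → ℝ^m be continuously differentiable, and fix t ∈ (a,b). Then the function s ↦ [ H(h(t,x(t),u(t),ψ(t),s))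 − ⟨ h_ψ(t,x(t),u(t),ψ(t),s), (d/dt h_x(t,x(t),u(t),ψ(t),s)) / (d/dt h_t(t,x(t),u(t),ψ(t),s)) ⟩ ] · (d/dt h_t(t,x(t),u(t),ψ(t),s)) is differentiable at s = 0, and its derivative at s = 0 equals ∂H/∂t · τ(t) + ⟨∇ₓH, ξ(t)⟩ + ⟨∇ᵤH, υ(t)⟩ + ⟨∇_ψH, π(t)⟩ − ⟨π(t), x′(t)⟩ − ⟨ψ(t), ξ′(t)⟩ + H · τ′(t), where τ(t) = T(t,x(t),u(t),ψ(t)), ξ(t) = X(t,x(t),u(t),ψ(t)), υ(t) = U(t,x(t),u(t),ψ(t)), π(t) = Ψ(t,x(t),u(t),ψ(t)), and H and its partial derivatives are evaluated at (t,x(t),u(t),ψ(t)). In particular, invariance in the sense of Definition 1 at time t is equivalent to the identity ∂H/∂t · τ(t) + ⟨∇ₓH, ξ(t)⟩ + ⟨∇ᵤH, υ(t)⟩ + ⟨∇_ψH, π(t)⟩ − ⟨π(t), x′(t)⟩ − ⟨ψ(t), ξ′(t)⟩ + H · τ′(t) = 0. -/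
open MeasureTheory Set RealInnerProductSpace

noncomputable section

lemma aux_clm_curve {D W : Type*} [NormedAddCommGroup D] [NormedSpace ℝ D]
    [NormedAddCommGroup W] [NormedSpace ℝ W]
    {f : D → W} (hf : ContDiff ℝ 2 f) {γ : ℝ → D} {e : D} {s₀ : ℝ}
    (hγ : HasDerivAt γ e s₀) (w : D) :
    HasDerivAt (fun s => fderiv ℝ f (γ s) w) (fderiv ℝ (fderiv ℝ f) (γ s₀) e w) s₀ := by
  have h1 : ContDiff ℝ 1 (fderiv ℝ f) := hf.fderiv_right (by norm_num)
  have h2 : HasFDerivAt (fderiv ℝ f) (fderiv ℝ (fderiv ℝ f) (γ s₀)) (γ s₀) :=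
    (h1.differentiable one_ne_zero (γ s₀)).hasFDerivAt
  have h3 : HasDerivAt (fun s => fderiv ℝ f (γ s)) (fderiv ℝ (fderiv ℝ f) (γ s₀) e) s₀ :=
    h2.comp_hasDerivAt s₀ hγ
  have h4 := (ContinuousLinearMap.apply ℝ W w).hasFDerivAt.comp_hasDerivAt s₀ h3
  exact h4

lemma aux_mixed {D W : Type*} [NormedAddCommGroup D] [NormedSpace ℝ D]
    [NormedAddCommGroup W] [NormedSpace ℝ W]
    (f : D → W) (hf : ContDiff ℝ 2 f)
    (ρ : ℝ → ℝ → D) (t : ℝ) (w e : D)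
    (hρ : ∀ s, HasDerivAt (ρ s) w t)
    (hγ : ∀ r, HasDerivAt (fun s => ρ s r) e 0) :
    HasDerivAt (fun s => deriv (fun r => f (ρ s r)) t)
      (deriv (fun r => deriv (fun s' => f (ρ s' r)) 0) t) 0 := by
  have hdf : Differentiable ℝ f := hf.differentiable two_ne_zero
  have e1 : ∀ s, deriv (fun r => f (ρ s r)) t = fderiv ℝ f (ρ s t) w := fun s =>
    ((hdf (ρ s t)).hasFDerivAt.comp_hasDerivAt t (hρ s)).deriv
  have e2 : HasDerivAt (fun s => fderiv ℝ f (ρ s t) w)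
      (fderiv ℝ (fderiv ℝ f) (ρ 0 t) e w) 0 := aux_clm_curve hf (hγ t) w
  have e3 : ∀ r, deriv (fun s' => f (ρ s' r)) 0 = fderiv ℝ f (ρ 0 r) e := fun r =>
    ((hdf _).hasFDerivAt.comp_hasDerivAt 0 (hγ r)).deriv
  have e4 : HasDerivAt (fun r => fderiv ℝ f (ρ 0 r) e)
      (fderiv ℝ (fderiv ℝ f) (ρ 0 t) w e) t := aux_clm_curve hf (hρ 0) e
  have sym : fderiv ℝ (fderiv ℝ f) (ρ 0 t) e w = fderiv ℝ (fderiv ℝ f) (ρ 0 t) w e :=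
    (hf.contDiffAt.isSymmSndFDerivAt (by simp)) e w
  have e5 : deriv (fun r => deriv (fun s' => f (ρ s' r)) 0) t
      = fderiv ℝ (fderiv ℝ f) (ρ 0 t) w e := by
    rw [show (fun r => deriv (fun s' => f (ρ s' r)) 0) = fun r => fderiv ℝ f (ρ 0 r) e
      from funext e3]
    exact e4.deriv
  have main : HasDerivAt (fun s => deriv (fun r => f (ρ s r)) t)
      (fderiv ℝ (fderiv ℝ f) (ρ 0 t) e w) 0 := by
    rw [show (fun s => deriv (fun r => f (ρ s r)) t) = fun s => fderiv ℝ f (ρ s t) w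
      from funext e1]
    exact e2
  rw [e5, ← sym]
  exact main

lemma aux_fderiv_quad {n m : ℕ} (Hc : ℝ × Vec n × Vec m × Vec n → ℝ) (hHc : ContDiff ℝ 1 Hc)
    (t : ℝ) (xx : Vec n) (uu : Vec m) (pp : Vec n) (τ : ℝ) (ξ : Vec n) (υ : Vec m) (π : Vec n) :
    fderiv ℝ Hc (t, xx, uu, pp) (τ, ξ, υ, π)
      = (deriv (fun r => Hc (r, xx, uu, pp)) t) * τ
        + ⟪gradient (fun y => Hc (t, y, uu, pp)) xx, ξ⟫
        + ⟪gradient (fun w => Hc (t, xx, w, pp)) uu, υ⟫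
        + ⟪gradient (fun q => Hc (t, xx, uu, q)) pp, π⟫ := by
  have hd : HasFDerivAt Hc (fderiv ℝ Hc (t, xx, uu, pp)) (t, xx, uu, pp) :=
    (hHc.differentiable one_ne_zero _).hasFDerivAt
  set Φ := fderiv ℝ Hc (t, xx, uu, pp) with hΦ
  -- partial in t
  have h1 : HasDerivAt (fun r => Hc (r, xx, uu, pp)) (Φ (1, 0, 0, 0)) t := by
    have hc : HasDerivAt (fun r : ℝ => ((r : ℝ), xx, uu, pp)) ((1:ℝ), (0:Vec n), (0:Vec m), (0:Vec n)) t :=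
      (hasDerivAt_id t).prodMk ((hasDerivAt_const t xx).prodMk
        ((hasDerivAt_const t uu).prodMk (hasDerivAt_const t pp)))
    exact hd.comp_hasDerivAt t hc
  -- partial in x
  have h2 : HasFDerivAt (fun y : Vec n => Hc (t, y, uu, pp))
      (Φ.comp ((0 : Vec n →L[ℝ] ℝ).prod ((ContinuousLinearMap.id ℝ (Vec n)).prod
        ((0 : Vec n →L[ℝ] Vec m).prod (0 : Vec n →L[ℝ] Vec n))))) xx := by
    exact hd.comp xx ((hasFDerivAt_const t xx).prodMk
      ((hasFDerivAt_id xx).prodMk ((hasFDerivAt_const uu xx).prodMk (hasFDerivAt_const pp xx))))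
  have h3 : HasFDerivAt (fun w : Vec m => Hc (t, xx, w, pp))
      (Φ.comp ((0 : Vec m →L[ℝ] ℝ).prod ((0 : Vec m →L[ℝ] Vec n).prod
        ((ContinuousLinearMap.id ℝ (Vec m)).prod (0 : Vec m →L[ℝ] Vec n))))) uu := by
    exact hd.comp uu ((hasFDerivAt_const t uu).prodMk
      ((hasFDerivAt_const xx uu).prodMk ((hasFDerivAt_id uu).prodMk (hasFDerivAt_const pp uu))))
  have h4 : HasFDerivAt (fun q : Vec n => Hc (t, xx, uu, q))
      (Φ.comp ((0 : Vec n →L[ℝ] ℝ).prod ((0 : Vec n →L[ℝ] Vec n).prod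
        ((0 : Vec n →L[ℝ] Vec m).prod (ContinuousLinearMap.id ℝ (Vec n)))))) pp := by
    exact hd.comp pp ((hasFDerivAt_const t pp).prodMk
      ((hasFDerivAt_const xx pp).prodMk ((hasFDerivAt_const uu pp).prodMk (hasFDerivAt_id pp))))
  have g2 : ⟪gradient (fun y => Hc (t, y, uu, pp)) xx, ξ⟫ = Φ (0, ξ, 0, 0) := by
    rw [gradient, InnerProductSpace.toDual_symm_apply, h2.fderiv]
    simp
  have g3 : ⟪gradient (fun w => Hc (t, xx, w, pp)) uu, υ⟫ = Φ (0, 0, υ, 0) := by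
    rw [gradient, InnerProductSpace.toDual_symm_apply, h3.fderiv]
    simp
  have g4 : ⟪gradient (fun q => Hc (t, xx, uu, q)) pp, π⟫ = Φ (0, 0, 0, π) := by
    rw [gradient, InnerProductSpace.toDual_symm_apply, h4.fderiv]
    simp
  have g1 : deriv (fun r => Hc (r, xx, uu, pp)) t = Φ (1, 0, 0, 0) := h1.deriv
  have hsplit : (τ, ξ, υ, π) = τ • ((1:ℝ), (0:Vec n), (0:Vec m), (0:Vec n))
      + ((0:ℝ), ξ, (0:Vec m), (0:Vec n)) + ((0:ℝ), (0:Vec n), υ, (0:Vec n))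
      + ((0:ℝ), (0:Vec n), (0:Vec m), π) := by
    simp [Prod.ext_iff]
  rw [g1, g2, g3, g4, hsplit, map_add, map_add, map_add, _root_.map_smul]
  simp only [smul_eq_mul]
  ring

/-- The Hamiltonian as a function on the product space. -/
def HcD {n m : ℕ} (L : ℝ → Vec n → Vec m → ℝ) (φ : ℝ → Vec n → Vec m → Vec n) :
    ℝ × Vec n × Vec m × Vec n → ℝ :=
  fun z => Ham L φ z.1 z.2.1 z.2.2.1 z.2.2.2

lemma HcD_contDiff {n m : ℕ} (L : ℝ → Vec n → Vec m → ℝ) (φ : ℝ → Vec n → Vec m → Vec n)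
    (hL : ContDiff ℝ 1 (fun p : ℝ × Vec n × Vec m => L p.1 p.2.1 p.2.2))
    (hφ : ContDiff ℝ 1 (fun p : ℝ × Vec n × Vec m => φ p.1 p.2.1 p.2.2)) :
    ContDiff ℝ 1 (HcD L φ) := by
  have hpr : ContDiff ℝ 1 (fun z : ℝ × Vec n × Vec m × Vec n => ((z.1, z.2.1, z.2.2.1) : ℝ × Vec n × Vec m)) :=
    contDiff_fst.prodMk ((contDiff_fst.comp contDiff_snd).prodMk
      (contDiff_fst.comp (contDiff_snd.comp contDiff_snd)))
  have h1 : ContDiff ℝ 1 (fun z : ℝ × Vec n × Vec m × Vec n => L z.1 z.2.1 z.2.2.1) := hL.comp hpr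
  have h2 : ContDiff ℝ 1 (fun z : ℝ × Vec n × Vec m × Vec n => φ z.1 z.2.1 z.2.2.1) := hφ.comp hpr
  have h3 : ContDiff ℝ 1 (fun z : ℝ × Vec n × Vec m × Vec n => z.2.2.2) :=
    contDiff_snd.comp (contDiff_snd.comp contDiff_snd)
  exact h1.neg.add (ContDiff.inner ℝ h3 h2)

/-- The invariance condition of Definition 1 is equivalent to the infinitesimal
identity (3.3): the function of the parameter `s` appearing in Definition 1 is
differentiable at `s = 0`, with derivative given by the left-hand side of (3.3). -/
theorem stmt_7 {n m : ℕ} {a b : ℝ} (hab : a < b)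
    (L : ℝ → Vec n → Vec m → ℝ) (φ : ℝ → Vec n → Vec m → Vec n)
    (hL : ContDiff ℝ 1 (fun p : ℝ × Vec n × Vec m => L p.1 p.2.1 p.2.2))
    (hφ : ContDiff ℝ 1 (fun p : ℝ × Vec n × Vec m => φ p.1 p.2.1 p.2.2))
    -- the one-parameter group of transformations, C², identity at s = 0
    (h : ℝ × Vec n × Vec m × Vec n × ℝ → ℝ × Vec n × Vec m × Vec n)
    (hh : ContDiff ℝ 2 h)
    (hid : ∀ (t : ℝ) (xx : Vec n) (uu : Vec m) (pp : Vec n),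
      h (t, xx, uu, pp, 0) = (t, xx, uu, pp))
    -- the infinitesimal generators
    (T : ℝ → Vec n → Vec m → Vec n → ℝ) (X : ℝ → Vec n → Vec m → Vec n → Vec n)
    (U : ℝ → Vec n → Vec m → Vec n → Vec m) (Ψ : ℝ → Vec n → Vec m → Vec n → Vec n)
    (hT : ∀ t xx uu pp, T t xx uu pp = deriv (fun s => (h (t, xx, uu, pp, s)).1) 0)
    (hX : ∀ t xx uu pp, X t xx uu pp = deriv (fun s => (h (t, xx, uu, pp, s)).2.1) 0)
    (hU : ∀ t xx uu pp, U t xx uu pp = deriv (fun s => (h (t, xx, uu, pp, s)).2.2.1) 0)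
    (hΨ : ∀ t xx uu pp, Ψ t xx uu pp = deriv (fun s => (h (t, xx, uu, pp, s)).2.2.2) 0)
    -- the trajectory, C¹ on [a,b], and an interior time t
    (x ψ : ℝ → Vec n) (u : ℝ → Vec m)
    (hx : ContDiffOn ℝ 1 x (Icc a b)) (hψ : ContDiffOn ℝ 1 ψ (Icc a b))
    (hu : ContDiffOn ℝ 1 u (Icc a b))
    (t : ℝ) (ht : t ∈ Ioo a b)
    -- the function of the parameter s appearing in Definition 1
    (F : ℝ → ℝ)
    (hF : F = fun s =>
      (Ham L φ (h (t, x t, u t, ψ t, s)).1 (h (t, x t, u t, ψ t, s)).2.1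
          (h (t, x t, u t, ψ t, s)).2.2.1 (h (t, x t, u t, ψ t, s)).2.2.2
        - ⟪(h (t, x t, u t, ψ t, s)).2.2.2,
            (derivWithin (fun r => (h (r, x r, u r, ψ r, s)).1) (Icc a b) t)⁻¹ •
              derivWithin (fun r => (h (r, x r, u r, ψ r, s)).2.1) (Icc a b) t⟫)
        * derivWithin (fun r => (h (r, x r, u r, ψ r, s)).1) (Icc a b) t)
    -- the right-hand side of the infinitesimal identity (3.3)
    (rhs : ℝ)
    (hrhs : rhs =
      Hpt (Ham L φ) t (x t) (u t) (ψ t) * T t (x t) (u t) (ψ t)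
        + ⟪Hpx (Ham L φ) t (x t) (u t) (ψ t), X t (x t) (u t) (ψ t)⟫
        + ⟪Hpu (Ham L φ) t (x t) (u t) (ψ t), U t (x t) (u t) (ψ t)⟫
        + ⟪Hpψ (Ham L φ) t (x t) (u t) (ψ t), Ψ t (x t) (u t) (ψ t)⟫
        - ⟪Ψ t (x t) (u t) (ψ t), derivWithin x (Icc a b) t⟫
        - ⟪ψ t, derivWithin (fun r => X r (x r) (u r) (ψ r)) (Icc a b) t⟫
        + Ham L φ t (x t) (u t) (ψ t)
            * derivWithin (fun r => T r (x r) (u r) (ψ r)) (Icc a b) t) :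
    HasDerivAt F rhs 0 ∧ (deriv F 0 = 0 ↔ rhs = 0) := by
  
  classical
  have hmem : Icc a b ∈ nhds t := Icc_mem_nhds ht.1 ht.2
  have hxd : HasDerivAt x (deriv x t) t :=
    ((hx.contDiffAt hmem).differentiableAt one_ne_zero).hasDerivAt
  have hud : HasDerivAt u (deriv u t) t :=
    ((hu.contDiffAt hmem).differentiableAt one_ne_zero).hasDerivAt
  have hψd : HasDerivAt ψ (deriv ψ t) t :=
    ((hψ.contDiffAt hmem).differentiableAt one_ne_zero).hasDerivAt
  have hρ : ∀ s : ℝ, HasDerivAt (fun r => (r, x r, u r, ψ r, s))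
      ((1 : ℝ), deriv x t, deriv u t, deriv ψ t, (0 : ℝ)) t := fun s =>
    (hasDerivAt_id t).prodMk (hxd.prodMk (hud.prodMk (hψd.prodMk (hasDerivAt_const t s))))
  have hγ : ∀ r : ℝ, HasDerivAt (fun s : ℝ => (r, x r, u r, ψ r, s))
      ((0 : ℝ), (0 : Vec n), (0 : Vec m), (0 : Vec n), (1 : ℝ)) 0 := fun r =>
    (hasDerivAt_const 0 r).prodMk ((hasDerivAt_const 0 (x r)).prodMk
      ((hasDerivAt_const 0 (u r)).prodMk ((hasDerivAt_const 0 (ψ r)).prodMk (hasDerivAt_id 0))))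
  have hh1 : ContDiff ℝ 2 (fun z : ℝ × Vec n × Vec m × Vec n × ℝ => (h z).1) :=
    contDiff_fst.comp hh
  have hh2 : ContDiff ℝ 2 (fun z : ℝ × Vec n × Vec m × Vec n × ℝ => (h z).2.1) :=
    contDiff_fst.comp (contDiff_snd.comp hh)
  -- the mixed second derivatives
  have hτdot : derivWithin (fun r => T r (x r) (u r) (ψ r)) (Icc a b) t
      = deriv (fun r => deriv (fun s' => (h (r, x r, u r, ψ r, s')).1) 0) t := by
    rw [derivWithin_of_mem_nhds hmem]
    congr 1
    funext r
    exact hT r (x r) (u r) (ψ r)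
  have hξdot : derivWithin (fun r => X r (x r) (u r) (ψ r)) (Icc a b) t
      = deriv (fun r => deriv (fun s' => (h (r, x r, u r, ψ r, s')).2.1) 0) t := by
    rw [derivWithin_of_mem_nhds hmem]
    congr 1
    funext r
    exact hX r (x r) (u r) (ψ r)
  have hG1 : HasDerivAt (fun s => deriv (fun r => (h (r, x r, u r, ψ r, s)).1) t)
      (derivWithin (fun r => T r (x r) (u r) (ψ r)) (Icc a b) t) 0 := by
    rw [hτdot]
    exact aux_mixed _ hh1 (fun s r => (r, x r, u r, ψ r, s)) t _ _ hρ hγ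
  have hG2 : HasDerivAt (fun s => deriv (fun r => (h (r, x r, u r, ψ r, s)).2.1) t)
      (derivWithin (fun r => X r (x r) (u r) (ψ r)) (Icc a b) t) 0 := by
    rw [hξdot]
    exact aux_mixed _ hh2 (fun s r => (r, x r, u r, ψ r, s)) t _ _ hρ hγ
  -- values at s = 0
  have hG10 : deriv (fun r => (h (r, x r, u r, ψ r, (0:ℝ))).1) t = 1 := by
    have hfun : (fun r => (h (r, x r, u r, ψ r, (0:ℝ))).1) = fun r => r := by
      funext r; rw [hid]
    rw [hfun]
    simp
  have hG20 : deriv (fun r => (h (r, x r, u r, ψ r, (0:ℝ))).2.1) t = deriv x t := by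
    have hfun : (fun r => (h (r, x r, u r, ψ r, (0:ℝ))).2.1) = x := by
      funext r; rw [hid]
    rw [hfun]
  -- derivative of the transformed point in s at 0
  have hhd : Differentiable ℝ h := hh.differentiable two_ne_zero
  have hz : h (t, x t, u t, ψ t, (0:ℝ)) = (t, x t, u t, ψ t) := hid t (x t) (u t) (ψ t)
  have hAcurve : HasDerivAt (fun s => h (t, x t, u t, ψ t, s))
      (fderiv ℝ h (t, x t, u t, ψ t, (0:ℝ)) ((0 : ℝ), (0 : Vec n), (0 : Vec m), (0 : Vec n), (1 : ℝ))) 0 :=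
    (hhd _).hasFDerivAt.comp_hasDerivAt 0 (hγ t)
  have hA2 := (ContinuousLinearMap.snd ℝ ℝ (Vec n × Vec m × Vec n)).hasFDerivAt.comp_hasDerivAt 0 hAcurve
  have hA1 := (ContinuousLinearMap.fst ℝ ℝ (Vec n × Vec m × Vec n)).hasFDerivAt.comp_hasDerivAt 0 hAcurve
  have hA21 := (ContinuousLinearMap.fst ℝ (Vec n) (Vec m × Vec n)).hasFDerivAt.comp_hasDerivAt 0 hA2
  have hA22 := (ContinuousLinearMap.snd ℝ (Vec n) (Vec m × Vec n)).hasFDerivAt.comp_hasDerivAt 0 hA2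
  have hA221 := (ContinuousLinearMap.fst ℝ (Vec m) (Vec n)).hasFDerivAt.comp_hasDerivAt 0 hA22
  have hA222 := (ContinuousLinearMap.snd ℝ (Vec m) (Vec n)).hasFDerivAt.comp_hasDerivAt 0 hA22
  have hVτ : T t (x t) (u t) (ψ t)
      = (fderiv ℝ h (t, x t, u t, ψ t, (0:ℝ)) ((0 : ℝ), (0 : Vec n), (0 : Vec m), (0 : Vec n), (1 : ℝ))).1 := by
    rw [hT]; exact hA1.deriv
  have hVξ : X t (x t) (u t) (ψ t)
      = (fderiv ℝ h (t, x t, u t, ψ t, (0:ℝ)) ((0 : ℝ), (0 : Vec n), (0 : Vec m), (0 : Vec n), (1 : ℝ))).2.1 := by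
    rw [hX]; exact hA21.deriv
  have hVυ : U t (x t) (u t) (ψ t)
      = (fderiv ℝ h (t, x t, u t, ψ t, (0:ℝ)) ((0 : ℝ), (0 : Vec n), (0 : Vec m), (0 : Vec n), (1 : ℝ))).2.2.1 := by
    rw [hU]; exact hA221.deriv
  have hVπ : Ψ t (x t) (u t) (ψ t)
      = (fderiv ℝ h (t, x t, u t, ψ t, (0:ℝ)) ((0 : ℝ), (0 : Vec n), (0 : Vec m), (0 : Vec n), (1 : ℝ))).2.2.2 := by
    rw [hΨ]; exact hA222.deriv
  have hΦd : HasDerivAt (fun s => (h (t, x t, u t, ψ t, s)).2.2.2) (Ψ t (x t) (u t) (ψ t)) 0 := by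
    rw [hVπ]; exact hA222
  -- the Hamiltonian composed with the flow
  have hHc : ContDiff ℝ 1 (HcD L φ) := HcD_contDiff L φ hL hφ
  have hHam0 : HasDerivAt (fun s => Ham L φ (h (t, x t, u t, ψ t, s)).1 (h (t, x t, u t, ψ t, s)).2.1
      (h (t, x t, u t, ψ t, s)).2.2.1 (h (t, x t, u t, ψ t, s)).2.2.2)
      (fderiv ℝ (HcD L φ) (t, x t, u t, ψ t)
        (fderiv ℝ h (t, x t, u t, ψ t, (0:ℝ)) ((0 : ℝ), (0 : Vec n), (0 : Vec m), (0 : Vec n), (1 : ℝ)))) 0 := by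
    have hHcd : HasFDerivAt (HcD L φ) (fderiv ℝ (HcD L φ) (t, x t, u t, ψ t))
        ((fun s => h (t, x t, u t, ψ t, s)) 0) := by
      rw [show (fun s => h (t, x t, u t, ψ t, s)) 0 = ((t, x t, u t, ψ t) : ℝ × Vec n × Vec m × Vec n) from hz]
      exact ((hHc.differentiable one_ne_zero) _).hasFDerivAt
    exact hHcd.comp_hasDerivAt 0 hAcurve
  have hαval : fderiv ℝ (HcD L φ) (t, x t, u t, ψ t)
        (fderiv ℝ h (t, x t, u t, ψ t, (0:ℝ)) ((0 : ℝ), (0 : Vec n), (0 : Vec m), (0 : Vec n), (1 : ℝ)))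
      = Hpt (Ham L φ) t (x t) (u t) (ψ t) * T t (x t) (u t) (ψ t)
        + ⟪Hpx (Ham L φ) t (x t) (u t) (ψ t), X t (x t) (u t) (ψ t)⟫
        + ⟪Hpu (Ham L φ) t (x t) (u t) (ψ t), U t (x t) (u t) (ψ t)⟫
        + ⟪Hpψ (Ham L φ) t (x t) (u t) (ψ t), Ψ t (x t) (u t) (ψ t)⟫ := by
    have hV : fderiv ℝ h (t, x t, u t, ψ t, (0:ℝ)) ((0 : ℝ), (0 : Vec n), (0 : Vec m), (0 : Vec n), (1 : ℝ))
        = (T t (x t) (u t) (ψ t), X t (x t) (u t) (ψ t), U t (x t) (u t) (ψ t), Ψ t (x t) (u t) (ψ t)) := by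
      rw [hVτ, hVξ, hVυ, hVπ]
    rw [hV, aux_fderiv_quad (HcD L φ) hHc]
    rfl
  -- assemble the product rule
  have h10ne : deriv (fun r => (h (r, x r, u r, ψ r, (0:ℝ))).1) t ≠ 0 := by
    rw [hG10]; norm_num
  have hFinal := (hHam0.sub ((hΦd.inner ℝ ((hG1.inv h10ne).smul hG2)))).mul hG1
  have hFeq : F = fun s =>
      (Ham L φ (h (t, x t, u t, ψ t, s)).1 (h (t, x t, u t, ψ t, s)).2.1
          (h (t, x t, u t, ψ t, s)).2.2.1 (h (t, x t, u t, ψ t, s)).2.2.2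
        - ⟪(h (t, x t, u t, ψ t, s)).2.2.2,
            (deriv (fun r => (h (r, x r, u r, ψ r, s)).1) t)⁻¹ •
              deriv (fun r => (h (r, x r, u r, ψ r, s)).2.1) t⟫)
        * deriv (fun r => (h (r, x r, u r, ψ r, s)).1) t := by
    rw [hF]
    funext s
    simp only [derivWithin_of_mem_nhds hmem]
  have hFd : HasDerivAt F rhs 0 := by
    rw [hFeq]
    refine hFinal.congr_deriv ?_
    symm
    rw [hrhs, hαval, hG10, hG20, hz, derivWithin_of_mem_nhds hmem]
    simp only [inner_add_right, real_inner_smul_right, smul_eq_mul]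
    norm_num
    simp only [hG10, hG20, hz, inv_one, one_smul]
    ring
  exact ⟨hFd, by rw [hFd.deriv]⟩
end
end
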